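/- Let $D(m)$ count unordered pairs of distinct sites at taxicab distance $m$ in an $L_x \times L_y$ lattice, let $A_s(m)$ count sites at taxicab distance $m$ from a fixed interior site $h$, let $L_s(m)$ count pairs of sites (both $\ne h$) collinear with $h$ in its row or column, with $h$ strictly between them, at taxicab distance $m$, and let $G_s(m) = L_s(m-2)$. Then $D_s(m) := D(m) - A_s(m) - L_s(m) + G_s(m)$ equals the number of unordered pairs of distinct sites, both different from $h$, whose graph distance in the von Neumann grid graph minus $h$ is exactly $m$. -/

import Mathlib

/-- Taxicab distance between two integer lattice points. -/
def taxi (p q : ℤ × ℤ) : ℤ := |p.1 - q.1| + |p.2 - q.2|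

/-- The `Lx × Ly` rectangular lattice `{1,…,Lx} × {1,…,Ly}`. -/
noncomputable def sites (Lx Ly : ℤ) : Finset (ℤ × ℤ) := Finset.Icc (1, 1) (Lx, Ly)

/-- `D(m)`: the number of unordered pairs of distinct lattice sites at taxicab
distance `m`. -/
noncomputable def pairCount (Lx Ly m : ℤ) : ℕ :=
  (((sites Lx Ly).powersetCard 2).filter
    (fun s => ∃ p ∈ s, ∃ q ∈ s, p ≠ q ∧ taxi p q = m)).card

/-- `A_s(m)`: the number of lattice sites at taxicab distance `m` from `h`. -/
noncomputable def Acount (Lx Ly : ℤ) (h : ℤ × ℤ) (m : ℤ) : ℕ :=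
  ((sites Lx Ly).filter (fun p => taxi p h = m)).card

/-- `u`, `h`, `v` lie in a common row or column, with `h` strictly between `u` and `v`. -/
def Between (u h v : ℤ × ℤ) : Prop :=
  (u.1 = h.1 ∧ h.1 = v.1 ∧ (u.2 < h.2 ∧ h.2 < v.2 ∨ v.2 < h.2 ∧ h.2 < u.2)) ∨
  (u.2 = h.2 ∧ h.2 = v.2 ∧ (u.1 < h.1 ∧ h.1 < v.1 ∨ v.1 < h.1 ∧ h.1 < u.1))

instance (u h v : ℤ × ℤ) : Decidable (Between u h v) := by
  unfold Between; infer_instance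

/-- `L_s(m)`: the number of unordered pairs of lattice sites, both different from `h`,
collinear with `h` in its row or column with `h` strictly between them, at taxicab
distance `m`. -/
noncomputable def Lcount (Lx Ly : ℤ) (h : ℤ × ℤ) (m : ℤ) : ℕ :=
  ((((sites Lx Ly).erase h).powersetCard 2).filter
    (fun s => ∃ p ∈ s, ∃ q ∈ s, p ≠ q ∧ Between p h q ∧ taxi p q = m)).card

/-- The von Neumann grid graph on the accessible sites `acc`. -/
def gridGraph (acc : Set (ℤ × ℤ)) : SimpleGraph (ℤ × ℤ) where
  Adj u v := taxi u v = 1 ∧ u ∈ acc ∧ v ∈ acc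
  symm := by
    constructor
    intro u v h
    exact ⟨by simpa [taxi, abs_sub_comm] using h.1, h.2.2, h.2.1⟩
  loopless := by
    constructor
    intro u h
    simp [taxi] at h

/-- The sites of the `Lx × Ly` rectangle with the single site `h` deleted. -/
def accRect (Lx Ly : ℤ) (h : ℤ × ℤ) : Set (ℤ × ℤ) :=
  {v | 1 ≤ v.1 ∧ v.1 ≤ Lx ∧ 1 ≤ v.2 ∧ v.2 ≤ Ly ∧ v ≠ h}

/-- The number of unordered pairs of distinct accessible sites whose graph distance in
the von Neumann grid graph minus `h` is exactly `m`. -/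
noncomputable def graphPairCount (Lx Ly : ℤ) (h : ℤ × ℤ) (m : ℕ) : ℕ :=
  {s : Set (ℤ × ℤ) | ∃ u v : ℤ × ℤ, u ≠ v ∧ s = {u, v} ∧
    u ∈ accRect Lx Ly h ∧ v ∈ accRect Lx Ly h ∧
    (gridGraph (accRect Lx Ly h)).dist u v = m}.ncard

open SimpleGraph

lemma taxi_comm (p q : ℤ × ℤ) : taxi p q = taxi q p := by
  simp [taxi, abs_sub_comm]

lemma taxi_natAbs (p q : ℤ × ℤ) :
    taxi p q = ((p.1 - q.1).natAbs : ℤ) + ((p.2 - q.2).natAbs : ℤ) := by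
  unfold taxi
  rw [Int.abs_eq_natAbs, Int.abs_eq_natAbs]

lemma taxi_triangle (u x v : ℤ × ℤ) : taxi u v ≤ taxi u x + taxi x v := by
  have h1 := abs_sub_le u.1 x.1 v.1
  have h2 := abs_sub_le u.2 x.2 v.2
  simp only [taxi]
  linarith

lemma taxi_parity3 (u x v : ℤ × ℤ) : (taxi u v + taxi u x + taxi x v) % 2 = 0 := by
  simp only [taxi]
  rw [Int.abs_eq_natAbs, Int.abs_eq_natAbs, Int.abs_eq_natAbs, Int.abs_eq_natAbs,
    Int.abs_eq_natAbs, Int.abs_eq_natAbs]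
  omega

lemma walk_dir (acc : Set (ℤ × ℤ)) (d : ℤ × ℤ) (hd : |d.1| + |d.2| = 1) :
    ∀ (n : ℕ) (p : ℤ × ℤ),
      (∀ k : ℕ, k ≤ n → ((p.1 + (k : ℤ) * d.1, p.2 + (k : ℤ) * d.2) : ℤ × ℤ) ∈ acc) →
      ∃ w : (gridGraph acc).Walk p (p.1 + (n : ℤ) * d.1, p.2 + (n : ℤ) * d.2), w.length = n := by
  intro n
  induction n with
  | zero =>
    intro p hmem
    have he : p = ((p.1 + ((0 : ℕ) : ℤ) * d.1, p.2 + ((0 : ℕ) : ℤ) * d.2) : ℤ × ℤ) := by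
      push_cast; simp
    exact ⟨(SimpleGraph.Walk.nil).copy rfl he, by simp⟩
  | succ n ih =>
    intro p hmem
    have h0 : p ∈ acc := by
      have h := hmem 0 (by omega)
      have he : ((p.1 + ((0:ℕ):ℤ) * d.1, p.2 + ((0:ℕ):ℤ) * d.2) : ℤ × ℤ) = p := by
        push_cast; simp
      rwa [he] at h
    have h1 : ((p.1 + d.1, p.2 + d.2) : ℤ × ℤ) ∈ acc := by
      have h := hmem 1 (by omega)
      have he : ((p.1 + ((1:ℕ):ℤ) * d.1, p.2 + ((1:ℕ):ℤ) * d.2) : ℤ × ℤ) = (p.1 + d.1, p.2 + d.2) := by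
        push_cast; ring_nf
      rwa [he] at h
    have hadj : (gridGraph acc).Adj p (p.1 + d.1, p.2 + d.2) := by
      refine ⟨?_, h0, h1⟩
      show |p.1 - (p.1 + d.1)| + |p.2 - (p.2 + d.2)| = 1
      rw [show p.1 - (p.1 + d.1) = -d.1 by ring, show p.2 - (p.2 + d.2) = -d.2 by ring,
        abs_neg, abs_neg]
      exact hd
    obtain ⟨w, hw⟩ := ih (p.1 + d.1, p.2 + d.2) (fun k hk => by
      have h := hmem (k + 1) (by omega)
      have he : ((p.1 + ((k+1:ℕ):ℤ) * d.1, p.2 + ((k+1:ℕ):ℤ) * d.2) : ℤ × ℤ)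
          = (((p.1 + d.1, p.2 + d.2) : ℤ × ℤ).1 + (k:ℤ) * d.1,
             ((p.1 + d.1, p.2 + d.2) : ℤ × ℤ).2 + (k:ℤ) * d.2) := by
        refine Prod.ext ?_ ?_ <;> (show _ = _; push_cast; ring)
      rwa [he] at h)
    have he2 : (((p.1 + d.1, p.2 + d.2) : ℤ × ℤ).1 + (n:ℤ) * d.1,
        ((p.1 + d.1, p.2 + d.2) : ℤ × ℤ).2 + (n:ℤ) * d.2)
        = ((p.1 + ((n+1:ℕ):ℤ) * d.1, p.2 + ((n+1:ℕ):ℤ) * d.2) : ℤ × ℤ) := by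
      refine Prod.ext ?_ ?_ <;> (show _ = _; push_cast; ring)
    refine ⟨SimpleGraph.Walk.cons hadj (w.copy rfl he2), by simp [hw]⟩

lemma length_lower (acc : Set (ℤ × ℤ)) :
    ∀ {u v : ℤ × ℤ} (w : (gridGraph acc).Walk u v), taxi u v ≤ w.length := by
  intro u v w
  induction w with
  | nil => simp [taxi]
  | @cons a b c hadj p ih =>
    have h1 : taxi a b = 1 := hadj.1
    have h2 := taxi_triangle a b c
    simp only [SimpleGraph.Walk.length_cons]
    push_cast
    linarith

lemma length_parity (acc : Set (ℤ × ℤ)) :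
    ∀ {u v : ℤ × ℤ} (w : (gridGraph acc).Walk u v), taxi u v % 2 = (w.length : ℤ) % 2 := by
  intro u v w
  induction w with
  | nil => simp [taxi]
  | @cons a b c hadj p ih =>
    have h1 : taxi a b = 1 := hadj.1
    have h2 := taxi_parity3 a b c
    simp only [SimpleGraph.Walk.length_cons]
    push_cast
    omega

lemma no_tight_col (acc : Set (ℤ × ℤ)) (hx hy : ℤ) (hh : ((hx, hy) : ℤ × ℤ) ∉ acc) :
    ∀ (n : ℕ) (a b : ℤ), a ≤ hy → hy < b →
    ∀ w : (gridGraph acc).Walk (hx, a) (hx, b), w.length = n → ((n : ℤ) ≠ b - a) := by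
  intro n
  induction n using Nat.strong_induction_on with
  | _ n ih =>
    intro a b ha hb w hlen hn
    cases w with
    | nil => omega
    | cons hadj p =>
      rename_i q
      obtain ⟨ht, hu, hv⟩ := hadj
      rcases eq_or_lt_of_le ha with heq | hlt
      · subst heq; exact hh hu
      · have hlow : taxi q (hx, b) ≤ p.length := length_lower acc p
        have hlen' : p.length + 1 = n := by rw [← hlen]; rfl
        have ht' : taxi (hx, a) q = 1 := ht
        rw [taxi_natAbs] at ht' hlow
        simp only at ht' hlow
        have hq : q = ((hx, a + 1) : ℤ × ℤ) := by
          refine Prod.ext ?_ ?_ <;> simp only <;> omega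
        subst hq
        exact ih p.length (by omega) (a+1) b (by omega) hb p rfl (by omega)

def swapHom (acc : Set (ℤ × ℤ)) : gridGraph acc →g gridGraph (Prod.swap ⁻¹' acc) where
  toFun := Prod.swap
  map_rel' := by
    intro u v h
    refine ⟨?_, by simpa using h.2.1, by simpa using h.2.2⟩
    have := h.1
    simp only [taxi] at this ⊢
    simp only [Prod.fst_swap, Prod.snd_swap]
    omega

lemma no_tight_row (acc : Set (ℤ × ℤ)) (hx hy : ℤ) (hh : ((hx, hy) : ℤ × ℤ) ∉ acc)
    (n : ℕ) (a b : ℤ) (ha : a ≤ hx) (hb : hx < b)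
    (w : (gridGraph acc).Walk (a, hy) (b, hy)) (hlen : w.length = n) : (n : ℤ) ≠ b - a := by
  have hh' : ((hy, hx) : ℤ × ℤ) ∉ Prod.swap ⁻¹' acc := by simpa using hh
  exact no_tight_col (Prod.swap ⁻¹' acc) hy hx hh' n a b ha hb
    (w.map (swapHom acc)) ((SimpleGraph.Walk.length_map _ _).trans hlen)

lemma walkV (acc : Set (ℤ × ℤ)) (x a b : ℤ)
    (hmem : ∀ t : ℤ, min a b ≤ t → t ≤ max a b → ((x, t) : ℤ × ℤ) ∈ acc) :
    ∃ w : (gridGraph acc).Walk (x, a) (x, b), (w.length : ℤ) = |b - a| := by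
  rcases le_total a b with hab | hab
  · obtain ⟨w, hw⟩ := walk_dir acc (0, 1) (by norm_num) (b - a).toNat (x, a) (fun k hk => by
      show ((x + (k:ℤ) * 0, a + (k:ℤ) * 1) : ℤ × ℤ) ∈ acc
      have he : ((x + (k:ℤ) * 0, a + (k:ℤ) * 1) : ℤ × ℤ) = (x, a + k) :=
        Prod.ext (by ring) (by ring)
      rw [he]
      exact hmem (a + k) (by omega) (by omega))
    have he : ((((x, a) : ℤ × ℤ).1 + ((b-a).toNat : ℤ) * ((0,1) : ℤ×ℤ).1,
        ((x, a) : ℤ × ℤ).2 + ((b-a).toNat : ℤ) * ((0,1) : ℤ×ℤ).2) : ℤ × ℤ) = (x, b) :=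
      Prod.ext (by show x + _ * 0 = x; omega) (by show a + _ * 1 = b; omega)
    refine ⟨(w.copy rfl he), ?_⟩
    rw [SimpleGraph.Walk.length_copy, hw]
    rw [Int.abs_eq_natAbs]
    omega
  · obtain ⟨w, hw⟩ := walk_dir acc (0, -1) (by norm_num) (a - b).toNat (x, a) (fun k hk => by
      show ((x + (k:ℤ) * 0, a + (k:ℤ) * (-1)) : ℤ × ℤ) ∈ acc
      have he : ((x + (k:ℤ) * 0, a + (k:ℤ) * (-1)) : ℤ × ℤ) = (x, a - k) :=
        Prod.ext (by ring) (by ring)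
      rw [he]
      exact hmem (a - k) (by omega) (by omega))
    have he : ((((x, a) : ℤ × ℤ).1 + ((a-b).toNat : ℤ) * ((0,-1) : ℤ×ℤ).1,
        ((x, a) : ℤ × ℤ).2 + ((a-b).toNat : ℤ) * ((0,-1) : ℤ×ℤ).2) : ℤ × ℤ) = (x, b) :=
      Prod.ext (by show x + _ * 0 = x; omega) (by show a + _ * (-1) = b; omega)
    refine ⟨(w.copy rfl he), ?_⟩
    rw [SimpleGraph.Walk.length_copy, hw]
    rw [Int.abs_eq_natAbs]
    omega

lemma walkH (acc : Set (ℤ × ℤ)) (y a b : ℤ)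
    (hmem : ∀ t : ℤ, min a b ≤ t → t ≤ max a b → ((t, y) : ℤ × ℤ) ∈ acc) :
    ∃ w : (gridGraph acc).Walk (a, y) (b, y), (w.length : ℤ) = |b - a| := by
  rcases le_total a b with hab | hab
  · obtain ⟨w, hw⟩ := walk_dir acc (1, 0) (by norm_num) (b - a).toNat (a, y) (fun k hk => by
      show ((a + (k:ℤ) * 1, y + (k:ℤ) * 0) : ℤ × ℤ) ∈ acc
      have he : ((a + (k:ℤ) * 1, y + (k:ℤ) * 0) : ℤ × ℤ) = (a + k, y) :=
        Prod.ext (by ring) (by ring)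
      rw [he]
      exact hmem (a + k) (by omega) (by omega))
    have he : ((((a, y) : ℤ × ℤ).1 + ((b-a).toNat : ℤ) * ((1,0) : ℤ×ℤ).1,
        ((a, y) : ℤ × ℤ).2 + ((b-a).toNat : ℤ) * ((1,0) : ℤ×ℤ).2) : ℤ × ℤ) = (b, y) :=
      Prod.ext (by show a + _ * 1 = b; omega) (by show y + _ * 0 = y; omega)
    refine ⟨(w.copy rfl he), ?_⟩
    rw [SimpleGraph.Walk.length_copy, hw]
    rw [Int.abs_eq_natAbs]
    omega
  · obtain ⟨w, hw⟩ := walk_dir acc (-1, 0) (by norm_num) (a - b).toNat (a, y) (fun k hk => by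
      show ((a + (k:ℤ) * (-1), y + (k:ℤ) * 0) : ℤ × ℤ) ∈ acc
      have he : ((a + (k:ℤ) * (-1), y + (k:ℤ) * 0) : ℤ × ℤ) = (a - k, y) :=
        Prod.ext (by ring) (by ring)
      rw [he]
      exact hmem (a - k) (by omega) (by omega))
    have he : ((((a, y) : ℤ × ℤ).1 + ((a-b).toNat : ℤ) * ((-1,0) : ℤ×ℤ).1,
        ((a, y) : ℤ × ℤ).2 + ((a-b).toNat : ℤ) * ((-1,0) : ℤ×ℤ).2) : ℤ × ℤ) = (b, y) :=
      Prod.ext (by show a + _ * (-1) = b; omega) (by show y + _ * 0 = y; omega)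
    refine ⟨(w.copy rfl he), ?_⟩
    rw [SimpleGraph.Walk.length_copy, hw]
    rw [Int.abs_eq_natAbs]
    omega

lemma walkL (acc : Set (ℤ × ℤ)) (u v : ℤ × ℤ)
    (hmem : ∀ p : ℤ × ℤ,
      (p.1 = u.1 ∧ min u.2 v.2 ≤ p.2 ∧ p.2 ≤ max u.2 v.2) ∨
      (p.2 = v.2 ∧ min u.1 v.1 ≤ p.1 ∧ p.1 ≤ max u.1 v.1) → p ∈ acc) :
    ∃ w : (gridGraph acc).Walk u v, (w.length : ℤ) = taxi u v := by
  obtain ⟨w1, h1⟩ := walkV acc u.1 u.2 v.2 (fun t ht1 ht2 => hmem (u.1, t) (Or.inl ⟨rfl, ht1, ht2⟩))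
  obtain ⟨w2, h2⟩ := walkH acc v.2 u.1 v.1 (fun t ht1 ht2 => hmem (t, v.2) (Or.inr ⟨rfl, ht1, ht2⟩))
  refine ⟨((w1.append w2).copy Prod.mk.eta Prod.mk.eta), ?_⟩
  rw [SimpleGraph.Walk.length_copy, SimpleGraph.Walk.length_append]
  push_cast
  rw [h1, h2, taxi_natAbs, Int.abs_eq_natAbs, Int.abs_eq_natAbs]
  omega



lemma mem_accRect {Lx Ly Hx Hy : ℤ} {p : ℤ × ℤ} :
    p ∈ accRect Lx Ly (Hx, Hy) ↔
      1 ≤ p.1 ∧ p.1 ≤ Lx ∧ 1 ≤ p.2 ∧ p.2 ≤ Ly ∧ ¬(p.1 = Hx ∧ p.2 = Hy) := by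
  unfold accRect
  simp only [Set.mem_setOf_eq, ne_eq, Prod.ext_iff]

lemma between_explicit {Hx Hy : ℤ} {u v : ℤ × ℤ} :
    Between u (Hx, Hy) v ↔
      (u.1 = Hx ∧ Hx = v.1 ∧ (u.2 < Hy ∧ Hy < v.2 ∨ v.2 < Hy ∧ Hy < u.2)) ∨
      (u.2 = Hy ∧ Hy = v.2 ∧ (u.1 < Hx ∧ Hx < v.1 ∨ v.1 < Hx ∧ Hx < u.1)) := Iff.rfl

lemma exists_walk_taxi {Lx Ly Hx Hy : ℤ} {u v : ℤ × ℤ}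
    (hu : u ∈ accRect Lx Ly (Hx, Hy)) (hv : v ∈ accRect Lx Ly (Hx, Hy))
    (hnb : ¬ Between u (Hx, Hy) v) :
    ∃ w : (gridGraph (accRect Lx Ly (Hx, Hy))).Walk u v, (w.length : ℤ) = taxi u v := by
  rw [mem_accRect] at hu hv
  rw [between_explicit] at hnb
  by_cases hP : (Hx = u.1 ∧ min u.2 v.2 ≤ Hy ∧ Hy ≤ max u.2 v.2) ∨
      (Hy = v.2 ∧ min u.1 v.1 ≤ Hx ∧ Hx ≤ max u.1 v.1)
  · have hP2 : ¬ ((Hx = v.1 ∧ min v.2 u.2 ≤ Hy ∧ Hy ≤ max v.2 u.2) ∨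
        (Hy = u.2 ∧ min v.1 u.1 ≤ Hx ∧ Hx ≤ max v.1 u.1)) := by omega
    obtain ⟨w, hw⟩ := walkL (accRect Lx Ly (Hx, Hy)) v u (fun p hp => by
      rw [mem_accRect]; omega)
    exact ⟨w.reverse, by rw [SimpleGraph.Walk.length_reverse, hw, taxi_comm]⟩
  · obtain ⟨w, hw⟩ := walkL (accRect Lx Ly (Hx, Hy)) u v (fun p hp => by
      rw [mem_accRect]; omega)
    exact ⟨w, hw⟩

lemma detour_col {Lx Ly Hx Hy a b : ℤ} (h1a : 1 ≤ a) (hbLy : b ≤ Ly) (ha : a < Hy)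
    (hb2 : Hy < b) (hx1 : 1 ≤ Hx) (hx2 : Hx + 1 ≤ Lx) :
    ∃ w : (gridGraph (accRect Lx Ly (Hx, Hy))).Walk (Hx, a) (Hx, b),
      (w.length : ℤ) = (b - a) + 2 := by
  set acc := accRect Lx Ly (Hx, Hy) with hacc
  obtain ⟨w1, hw1⟩ := walkV acc Hx a (Hy - 1) (fun t h1 h2 => by rw [hacc, mem_accRect]; omega)
  obtain ⟨w3, hw3⟩ := walkV acc Hx (Hy + 1) b (fun t h1 h2 => by rw [hacc, mem_accRect]; omega)
  have m1 : ((Hx, Hy - 1) : ℤ × ℤ) ∈ acc := by rw [hacc, mem_accRect]; omega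
  have m2 : ((Hx + 1, Hy - 1) : ℤ × ℤ) ∈ acc := by rw [hacc, mem_accRect]; omega
  have m3 : ((Hx + 1, Hy) : ℤ × ℤ) ∈ acc := by rw [hacc, mem_accRect]; omega
  have m4 : ((Hx + 1, Hy + 1) : ℤ × ℤ) ∈ acc := by rw [hacc, mem_accRect]; omega
  have m5 : ((Hx, Hy + 1) : ℤ × ℤ) ∈ acc := by rw [hacc, mem_accRect]; omega
  have a1 : (gridGraph acc).Adj (Hx, Hy - 1) (Hx + 1, Hy - 1) :=
    ⟨by rw [taxi_natAbs]; simp only; omega, m1, m2⟩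
  have a2 : (gridGraph acc).Adj (Hx + 1, Hy - 1) (Hx + 1, Hy) :=
    ⟨by rw [taxi_natAbs]; simp only; omega, m2, m3⟩
  have a3 : (gridGraph acc).Adj (Hx + 1, Hy) (Hx + 1, Hy + 1) :=
    ⟨by rw [taxi_natAbs]; simp only; omega, m3, m4⟩
  have a4 : (gridGraph acc).Adj (Hx + 1, Hy + 1) (Hx, Hy + 1) :=
    ⟨by rw [taxi_natAbs]; simp only; omega, m4, m5⟩
  refine ⟨w1.append (SimpleGraph.Walk.cons a1 (SimpleGraph.Walk.cons a2
    (SimpleGraph.Walk.cons a3 (SimpleGraph.Walk.cons a4 w3)))), ?_⟩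
  simp only [SimpleGraph.Walk.length_append, SimpleGraph.Walk.length_cons]
  push_cast
  rw [Int.abs_eq_natAbs] at hw1 hw3
  omega

lemma detour_row {Lx Ly Hx Hy a b : ℤ} (h1a : 1 ≤ a) (hbLx : b ≤ Lx) (ha : a < Hx)
    (hb2 : Hx < b) (hy1 : 1 ≤ Hy) (hy2 : Hy + 1 ≤ Ly) :
    ∃ w : (gridGraph (accRect Lx Ly (Hx, Hy))).Walk (a, Hy) (b, Hy),
      (w.length : ℤ) = (b - a) + 2 := by
  set acc := accRect Lx Ly (Hx, Hy) with hacc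
  obtain ⟨w1, hw1⟩ := walkH acc Hy a (Hx - 1) (fun t h1 h2 => by rw [hacc, mem_accRect]; omega)
  obtain ⟨w3, hw3⟩ := walkH acc Hy (Hx + 1) b (fun t h1 h2 => by rw [hacc, mem_accRect]; omega)
  have m1 : ((Hx - 1, Hy) : ℤ × ℤ) ∈ acc := by rw [hacc, mem_accRect]; omega
  have m2 : ((Hx - 1, Hy + 1) : ℤ × ℤ) ∈ acc := by rw [hacc, mem_accRect]; omega
  have m3 : ((Hx, Hy + 1) : ℤ × ℤ) ∈ acc := by rw [hacc, mem_accRect]; omega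
  have m4 : ((Hx + 1, Hy + 1) : ℤ × ℤ) ∈ acc := by rw [hacc, mem_accRect]; omega
  have m5 : ((Hx + 1, Hy) : ℤ × ℤ) ∈ acc := by rw [hacc, mem_accRect]; omega
  have a1 : (gridGraph acc).Adj (Hx - 1, Hy) (Hx - 1, Hy + 1) :=
    ⟨by rw [taxi_natAbs]; simp only; omega, m1, m2⟩
  have a2 : (gridGraph acc).Adj (Hx - 1, Hy + 1) (Hx, Hy + 1) :=
    ⟨by rw [taxi_natAbs]; simp only; omega, m2, m3⟩
  have a3 : (gridGraph acc).Adj (Hx, Hy + 1) (Hx + 1, Hy + 1) :=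
    ⟨by rw [taxi_natAbs]; simp only; omega, m3, m4⟩
  have a4 : (gridGraph acc).Adj (Hx + 1, Hy + 1) (Hx + 1, Hy) :=
    ⟨by rw [taxi_natAbs]; simp only; omega, m4, m5⟩
  refine ⟨w1.append (SimpleGraph.Walk.cons a1 (SimpleGraph.Walk.cons a2
    (SimpleGraph.Walk.cons a3 (SimpleGraph.Walk.cons a4 w3)))), ?_⟩
  simp only [SimpleGraph.Walk.length_append, SimpleGraph.Walk.length_cons]
  push_cast
  rw [Int.abs_eq_natAbs] at hw1 hw3
  omega

lemma exists_walk_between {Lx Ly Hx Hy : ℤ}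
    (hHx1 : 1 < Hx) (hHx2 : Hx < Lx) (hHy1 : 1 < Hy) (hHy2 : Hy < Ly) {u v : ℤ × ℤ}
    (hu : u ∈ accRect Lx Ly (Hx, Hy)) (hv : v ∈ accRect Lx Ly (Hx, Hy))
    (hb : Between u (Hx, Hy) v) :
    ∃ w : (gridGraph (accRect Lx Ly (Hx, Hy))).Walk u v, (w.length : ℤ) = taxi u v + 2 := by
  rw [mem_accRect] at hu hv
  rw [between_explicit] at hb
  rcases hb with ⟨h1, h2, h3 | h3⟩ | ⟨h1, h2, h3 | h3⟩
  · obtain ⟨w, hw⟩ := detour_col (Lx := Lx) (Ly := Ly) (Hx := Hx) (Hy := Hy)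
      (a := u.2) (b := v.2) (by omega) (by omega) h3.1 h3.2 (by omega) (by omega)
    have heu : ((Hx, u.2) : ℤ × ℤ) = u := by rw [← h1]
    have hev : ((Hx, v.2) : ℤ × ℤ) = v := by rw [h2]
    refine ⟨w.copy heu hev, ?_⟩
    rw [SimpleGraph.Walk.length_copy, hw, taxi_natAbs]
    omega
  · obtain ⟨w, hw⟩ := detour_col (Lx := Lx) (Ly := Ly) (Hx := Hx) (Hy := Hy)
      (a := v.2) (b := u.2) (by omega) (by omega) h3.1 h3.2 (by omega) (by omega)
    have heu : ((Hx, v.2) : ℤ × ℤ) = v := by rw [h2]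
    have hev : ((Hx, u.2) : ℤ × ℤ) = u := by rw [← h1]
    refine ⟨(w.copy heu hev).reverse, ?_⟩
    rw [SimpleGraph.Walk.length_reverse, SimpleGraph.Walk.length_copy, hw, taxi_natAbs]
    omega
  · obtain ⟨w, hw⟩ := detour_row (Lx := Lx) (Ly := Ly) (Hx := Hx) (Hy := Hy)
      (a := u.1) (b := v.1) (by omega) (by omega) h3.1 h3.2 (by omega) (by omega)
    have heu : ((u.1, Hy) : ℤ × ℤ) = u := by rw [← h1]
    have hev : ((v.1, Hy) : ℤ × ℤ) = v := by rw [h2]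
    refine ⟨w.copy heu hev, ?_⟩
    rw [SimpleGraph.Walk.length_copy, hw, taxi_natAbs]
    omega
  · obtain ⟨w, hw⟩ := detour_row (Lx := Lx) (Ly := Ly) (Hx := Hx) (Hy := Hy)
      (a := v.1) (b := u.1) (by omega) (by omega) h3.1 h3.2 (by omega) (by omega)
    have heu : ((v.1, Hy) : ℤ × ℤ) = v := by rw [h2]
    have hev : ((u.1, Hy) : ℤ × ℤ) = u := by rw [← h1]
    refine ⟨(w.copy heu hev).reverse, ?_⟩
    rw [SimpleGraph.Walk.length_reverse, SimpleGraph.Walk.length_copy, hw, taxi_natAbs]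
    omega

lemma dist_not_between {Lx Ly Hx Hy : ℤ} {u v : ℤ × ℤ}
    (hu : u ∈ accRect Lx Ly (Hx, Hy)) (hv : v ∈ accRect Lx Ly (Hx, Hy))
    (hnb : ¬ Between u (Hx, Hy) v) :
    ((gridGraph (accRect Lx Ly (Hx, Hy))).dist u v : ℤ) = taxi u v := by
  obtain ⟨w, hw⟩ := exists_walk_taxi hu hv hnb
  have hub := SimpleGraph.dist_le w
  obtain ⟨p, hp⟩ := w.reachable.exists_walk_length_eq_dist
  have hlb := length_lower _ p
  rw [hp] at hlb
  omega

lemma hcenter_not_mem {Lx Ly Hx Hy : ℤ} : ((Hx, Hy) : ℤ × ℤ) ∉ accRect Lx Ly (Hx, Hy) := by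
  intro hmem
  exact (mem_accRect.mp hmem).2.2.2.2 ⟨rfl, rfl⟩

lemma dist_between {Lx Ly Hx Hy : ℤ}
    (hHx1 : 1 < Hx) (hHx2 : Hx < Lx) (hHy1 : 1 < Hy) (hHy2 : Hy < Ly) {u v : ℤ × ℤ}
    (hu : u ∈ accRect Lx Ly (Hx, Hy)) (hv : v ∈ accRect Lx Ly (Hx, Hy))
    (hb : Between u (Hx, Hy) v) :
    ((gridGraph (accRect Lx Ly (Hx, Hy))).dist u v : ℤ) = taxi u v + 2 := by
  obtain ⟨w, hw⟩ := exists_walk_between hHx1 hHx2 hHy1 hHy2 hu hv hb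
  have hub := SimpleGraph.dist_le w
  obtain ⟨p, hp⟩ := w.reachable.exists_walk_length_eq_dist
  have hlb := length_lower _ p
  rw [hp] at hlb
  have hpar := length_parity _ p
  rw [hp] at hpar
  have hne : ((gridGraph (accRect Lx Ly (Hx, Hy))).dist u v : ℤ) ≠ taxi u v := by
    intro heq
    rw [between_explicit] at hb
    rcases hb with ⟨h1, h2, h3 | h3⟩ | ⟨h1, h2, h3 | h3⟩
    · have heu : u = ((Hx, u.2) : ℤ × ℤ) := by rw [← h1]
      have hev : v = ((Hx, v.2) : ℤ × ℤ) := by rw [h2]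
      have ht : taxi u v = v.2 - u.2 := by rw [taxi_natAbs]; omega
      exact no_tight_col _ Hx Hy hcenter_not_mem (p.copy heu hev).length u.2 v.2
        (le_of_lt h3.1) h3.2 (p.copy heu hev) rfl
        (by rw [SimpleGraph.Walk.length_copy, hp]; omega)
    · have heu : u = ((Hx, u.2) : ℤ × ℤ) := by rw [← h1]
      have hev : v = ((Hx, v.2) : ℤ × ℤ) := by rw [h2]
      have ht : taxi u v = u.2 - v.2 := by rw [taxi_natAbs]; omega
      exact no_tight_col _ Hx Hy hcenter_not_mem ((p.copy heu hev).reverse).length v.2 u.2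
        (le_of_lt h3.1) h3.2 (p.copy heu hev).reverse rfl
        (by rw [SimpleGraph.Walk.length_reverse, SimpleGraph.Walk.length_copy, hp]; omega)
    · have heu : u = ((u.1, Hy) : ℤ × ℤ) := by rw [← h1]
      have hev : v = ((v.1, Hy) : ℤ × ℤ) := by rw [h2]
      have ht : taxi u v = v.1 - u.1 := by rw [taxi_natAbs]; omega
      exact no_tight_row _ Hx Hy hcenter_not_mem (p.copy heu hev).length u.1 v.1
        (le_of_lt h3.1) h3.2 (p.copy heu hev) rfl
        (by rw [SimpleGraph.Walk.length_copy, hp]; omega)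
    · have heu : u = ((u.1, Hy) : ℤ × ℤ) := by rw [← h1]
      have hev : v = ((v.1, Hy) : ℤ × ℤ) := by rw [h2]
      have ht : taxi u v = u.1 - v.1 := by rw [taxi_natAbs]; omega
      exact no_tight_row _ Hx Hy hcenter_not_mem ((p.copy heu hev).reverse).length v.1 u.1
        (le_of_lt h3.1) h3.2 (p.copy heu hev).reverse rfl
        (by rw [SimpleGraph.Walk.length_reverse, SimpleGraph.Walk.length_copy, hp]; omega)
  omega



lemma between_symm {u h v : ℤ × ℤ} (hb : Between u h v) : Between v h u := by
  unfold Between at hb ⊢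
  omega

lemma expair {u v : ℤ × ℤ} (huv : u ≠ v) {R : ℤ × ℤ → ℤ × ℤ → Prop}
    (hR : ∀ a b, R a b → R b a) :
    (∃ p ∈ ({u, v} : Finset (ℤ × ℤ)), ∃ q ∈ ({u, v} : Finset (ℤ × ℤ)), p ≠ q ∧ R p q)
      ↔ R u v := by
  constructor
  · rintro ⟨p, hp, q, hq, hpq, hr⟩
    simp only [Finset.mem_insert, Finset.mem_singleton] at hp hq
    rcases hp with rfl | rfl <;> rcases hq with rfl | rfl
    · exact absurd rfl hpq
    · exact hr
    · exact hR _ _ hr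
    · exact absurd rfl hpq
  · intro hr
    exact ⟨u, by simp, v, by simp, huv, hr⟩

lemma mem_acc_iff_mem_erase {Lx Ly Hx Hy : ℤ} (p : ℤ × ℤ) :
    p ∈ accRect Lx Ly (Hx, Hy) ↔ p ∈ (sites Lx Ly).erase (Hx, Hy) := by
  rw [mem_accRect]
  simp only [sites, Finset.mem_erase, Finset.mem_Icc, Prod.le_def, ne_eq, Prod.ext_iff]
  omega

lemma graphPairCount_eq {Lx Ly Hx Hy : ℤ} {m : ℕ} (F : Finset (Finset (ℤ × ℤ)))
    (hF : ∀ s : Finset (ℤ × ℤ), s ∈ F ↔ (s ⊆ (sites Lx Ly).erase (Hx, Hy) ∧ s.card = 2 ∧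
      ∃ p ∈ s, ∃ q ∈ s, p ≠ q ∧ (gridGraph (accRect Lx Ly (Hx, Hy))).dist p q = m)) :
    graphPairCount Lx Ly (Hx, Hy) m = F.card := by
  unfold graphPairCount
  have hset : {s : Set (ℤ × ℤ) | ∃ u v : ℤ × ℤ, u ≠ v ∧ s = {u, v} ∧
      u ∈ accRect Lx Ly (Hx, Hy) ∧ v ∈ accRect Lx Ly (Hx, Hy) ∧
      (gridGraph (accRect Lx Ly (Hx, Hy))).dist u v = m}
      = (fun t : Finset (ℤ × ℤ) => (↑t : Set (ℤ × ℤ))) '' ↑F := by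
    ext s
    simp only [Set.mem_setOf_eq, Set.mem_image, Finset.mem_coe]
    constructor
    · rintro ⟨u, v, huv, rfl, hu, hv, hd⟩
      refine ⟨{u, v}, (hF _).mpr ⟨?_, Finset.card_pair huv, u, by simp, v, by simp, huv, hd⟩, by simp⟩
      intro x hx
      simp only [Finset.mem_insert, Finset.mem_singleton] at hx
      rcases hx with rfl | rfl
      · exact (mem_acc_iff_mem_erase x).mp hu
      · exact (mem_acc_iff_mem_erase x).mp hv
    · rintro ⟨t, ht, rfl⟩
      obtain ⟨hsub, hcard, p, hp, q, hq, hpq, hd⟩ := (hF t).mp ht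
      obtain ⟨u, v, huv, rfl⟩ := Finset.card_eq_two.mp hcard
      refine ⟨p, q, hpq, ?_, (mem_acc_iff_mem_erase p).mpr (hsub hp),
        (mem_acc_iff_mem_erase q).mpr (hsub hq), hd⟩
      simp only [Finset.mem_insert, Finset.mem_singleton] at hp hq
      simp only [Finset.coe_insert, Finset.coe_singleton]
      rcases hp with rfl | rfl <;> rcases hq with rfl | rfl
      · exact absurd rfl hpq
      · rfl
      · exact (Set.pair_comm p q).symm
      · exact absurd rfl hpq
  rw [hset, Set.ncard_image_of_injective _ Finset.coe_injective, Set.ncard_coe_finset]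

set_option maxHeartbeats 2000000 in
theorem stmt16 (Lx Ly Hx Hy : ℤ) (hLx : 3 ≤ Lx) (hLy : 3 ≤ Ly)
    (hHx1 : 1 < Hx) (hHx2 : Hx < Lx) (hHy1 : 1 < Hy) (hHy2 : Hy < Ly)
    (m : ℕ) (hm : 1 ≤ m) :
    (graphPairCount Lx Ly (Hx, Hy) m : ℤ) =
      (pairCount Lx Ly m : ℤ) - (Acount Lx Ly (Hx, Hy) m : ℤ) -
        (Lcount Lx Ly (Hx, Hy) m : ℤ) + (Lcount Lx Ly (Hx, Hy) ((m : ℤ) - 2) : ℤ) := by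
  classical
  have hsymD : ∀ a b : ℤ × ℤ,
      (gridGraph (accRect Lx Ly (Hx, Hy))).dist a b = m →
      (gridGraph (accRect Lx Ly (Hx, Hy))).dist b a = m := fun a b h => by
    rwa [SimpleGraph.dist_comm]
  have hsymC : ∀ a b : ℤ × ℤ,
      (¬ Between a (Hx, Hy) b ∧ taxi a b = (m : ℤ)) →
      (¬ Between b (Hx, Hy) a ∧ taxi b a = (m : ℤ)) := fun a b h =>
    ⟨fun hb => h.1 (between_symm hb), by rw [taxi_comm]; exact h.2⟩
  have hsymB2 : ∀ a b : ℤ × ℤ,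
      (Between a (Hx, Hy) b ∧ taxi a b = (m : ℤ) - 2) →
      (Between b (Hx, Hy) a ∧ taxi b a = (m : ℤ) - 2) := fun a b h =>
    ⟨between_symm h.1, by rw [taxi_comm]; exact h.2⟩
  have hsymBm : ∀ a b : ℤ × ℤ,
      (Between a (Hx, Hy) b ∧ taxi a b = (m : ℤ)) →
      (Between b (Hx, Hy) a ∧ taxi b a = (m : ℤ)) := fun a b h =>
    ⟨between_symm h.1, by rw [taxi_comm]; exact h.2⟩
  have hsymT : ∀ a b : ℤ × ℤ, taxi a b = (m : ℤ) → taxi b a = (m : ℤ) := fun a b h => by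
    rw [taxi_comm]; exact h
  have hsymBe : ∀ a b : ℤ × ℤ, Between a (Hx, Hy) b → Between b (Hx, Hy) a := fun a b h =>
    between_symm h
  have hcard2 : ∀ s ∈ ((sites Lx Ly).erase (Hx, Hy)).powersetCard 2,
      ∃ u v : ℤ × ℤ, u ≠ v ∧ s = {u, v} ∧
        u ∈ (sites Lx Ly).erase (Hx, Hy) ∧ v ∈ (sites Lx Ly).erase (Hx, Hy) := by
    intro s hs
    rw [Finset.mem_powersetCard] at hs
    obtain ⟨u, v, huv, rfl⟩ := Finset.card_eq_two.mp hs.2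
    exact ⟨u, v, huv, rfl, hs.1 (by simp), hs.1 (by simp)⟩
  have key : ∀ u v : ℤ × ℤ, u ∈ (sites Lx Ly).erase (Hx, Hy) →
      v ∈ (sites Lx Ly).erase (Hx, Hy) → u ≠ v →
      ((gridGraph (accRect Lx Ly (Hx, Hy))).dist u v = m ↔
        ((¬ Between u (Hx, Hy) v ∧ taxi u v = (m : ℤ)) ∨
         (Between u (Hx, Hy) v ∧ taxi u v = (m : ℤ) - 2))) := by
    intro u v hu hv huv
    have hu' := (mem_acc_iff_mem_erase u).mpr hu
    have hv' := (mem_acc_iff_mem_erase v).mpr hv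
    by_cases hb : Between u (Hx, Hy) v
    · have hd := dist_between hHx1 hHx2 hHy1 hHy2 hu' hv' hb
      constructor
      · intro he
        exact Or.inr ⟨hb, by omega⟩
      · rintro (⟨hnb, _⟩ | ⟨_, ht⟩)
        · exact absurd hb hnb
        · omega
    · have hd := dist_not_between hu' hv' hb
      constructor
      · intro he
        exact Or.inl ⟨hb, by omega⟩
      · rintro (⟨_, ht⟩ | ⟨hb', _⟩)
        · omega
        · exact absurd hb' hb
  -- e1 : graphPairCount as a finset card
  have e1 : graphPairCount Lx Ly (Hx, Hy) m
      = ((((sites Lx Ly).erase (Hx, Hy)).powersetCard 2).filter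
          (fun s => ∃ p ∈ s, ∃ q ∈ s, p ≠ q ∧
            (gridGraph (accRect Lx Ly (Hx, Hy))).dist p q = m)).card := by
    apply graphPairCount_eq
    intro s
    simp only [Finset.mem_filter, Finset.mem_powersetCard]
    tauto
  -- e2 : split by Between / not Between
  have e2 : ((((sites Lx Ly).erase (Hx, Hy)).powersetCard 2).filter
        (fun s => ∃ p ∈ s, ∃ q ∈ s, p ≠ q ∧
          (gridGraph (accRect Lx Ly (Hx, Hy))).dist p q = m)).card
      = ((((sites Lx Ly).erase (Hx, Hy)).powersetCard 2).filter
          (fun s => ∃ p ∈ s, ∃ q ∈ s, p ≠ q ∧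
            (¬ Between p (Hx, Hy) q ∧ taxi p q = (m : ℤ)))).card
        + Lcount Lx Ly (Hx, Hy) ((m : ℤ) - 2) := by
    have hLc : Lcount Lx Ly (Hx, Hy) ((m : ℤ) - 2)
        = ((((sites Lx Ly).erase (Hx, Hy)).powersetCard 2).filter
            (fun s => ∃ p ∈ s, ∃ q ∈ s, p ≠ q ∧
              (Between p (Hx, Hy) q ∧ taxi p q = (m : ℤ) - 2))).card := by
      unfold Lcount
      exact congrArg Finset.card (Finset.filter_congr_decidable _ _ _)
    rw [hLc]
    have hsplit : (((sites Lx Ly).erase (Hx, Hy)).powersetCard 2).filter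
          (fun s => ∃ p ∈ s, ∃ q ∈ s, p ≠ q ∧
            (gridGraph (accRect Lx Ly (Hx, Hy))).dist p q = m)
        = (((sites Lx Ly).erase (Hx, Hy)).powersetCard 2).filter
          (fun s => (∃ p ∈ s, ∃ q ∈ s, p ≠ q ∧
              (¬ Between p (Hx, Hy) q ∧ taxi p q = (m : ℤ)))
            ∨ (∃ p ∈ s, ∃ q ∈ s, p ≠ q ∧
              (Between p (Hx, Hy) q ∧ taxi p q = (m : ℤ) - 2))) := by
      apply Finset.filter_congr
      intro s hs
      obtain ⟨u, v, huv, rfl, hu, hv⟩ := hcard2 s hs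
      rw [expair huv hsymD, expair huv hsymC, expair huv hsymB2]
      exact key u v hu hv huv
    rw [hsplit, Finset.filter_or]
    apply Finset.card_union_of_disjoint
    rw [Finset.disjoint_left]
    intro s hs1 hs2
    rw [Finset.mem_filter] at hs1 hs2
    obtain ⟨u, v, huv, rfl, hu, hv⟩ := hcard2 s hs1.1
    have h1 := (expair huv hsymC).mp hs1.2
    have h2 := (expair huv hsymB2).mp hs2.2
    exact h1.1 h2.1
  -- e3 : split taxi = m pairs by Between
  have e3 : ((((sites Lx Ly).erase (Hx, Hy)).powersetCard 2).filter
        (fun s => ∃ p ∈ s, ∃ q ∈ s, p ≠ q ∧ taxi p q = (m : ℤ))).card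
      = Lcount Lx Ly (Hx, Hy) (m : ℤ)
        + ((((sites Lx Ly).erase (Hx, Hy)).powersetCard 2).filter
            (fun s => ∃ p ∈ s, ∃ q ∈ s, p ≠ q ∧
              (¬ Between p (Hx, Hy) q ∧ taxi p q = (m : ℤ)))).card := by
    have hsplit := Finset.card_filter_add_card_filter_not
      (s := (((sites Lx Ly).erase (Hx, Hy)).powersetCard 2).filter
        (fun s => ∃ p ∈ s, ∃ q ∈ s, p ≠ q ∧ taxi p q = (m : ℤ)))
      (p := fun s => ∃ p ∈ s, ∃ q ∈ s, p ≠ q ∧ Between p (Hx, Hy) q)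
    rw [Finset.filter_filter, Finset.filter_filter] at hsplit
    have hA : (((sites Lx Ly).erase (Hx, Hy)).powersetCard 2).filter
          (fun s => (∃ p ∈ s, ∃ q ∈ s, p ≠ q ∧ taxi p q = (m : ℤ))
            ∧ (∃ p ∈ s, ∃ q ∈ s, p ≠ q ∧ Between p (Hx, Hy) q))
        = (((sites Lx Ly).erase (Hx, Hy)).powersetCard 2).filter
          (fun s => ∃ p ∈ s, ∃ q ∈ s, p ≠ q ∧ Between p (Hx, Hy) q ∧ taxi p q = (m : ℤ)) := by
      apply Finset.filter_congr
      intro s hs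
      obtain ⟨u, v, huv, rfl, hu, hv⟩ := hcard2 s hs
      rw [expair huv hsymT, expair huv hsymBe, expair huv hsymBm]
      tauto
    have hB : (((sites Lx Ly).erase (Hx, Hy)).powersetCard 2).filter
          (fun s => (∃ p ∈ s, ∃ q ∈ s, p ≠ q ∧ taxi p q = (m : ℤ))
            ∧ ¬ (∃ p ∈ s, ∃ q ∈ s, p ≠ q ∧ Between p (Hx, Hy) q))
        = (((sites Lx Ly).erase (Hx, Hy)).powersetCard 2).filter
          (fun s => ∃ p ∈ s, ∃ q ∈ s, p ≠ q ∧
            (¬ Between p (Hx, Hy) q ∧ taxi p q = (m : ℤ))) := by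
      apply Finset.filter_congr
      intro s hs
      obtain ⟨u, v, huv, rfl, hu, hv⟩ := hcard2 s hs
      rw [expair huv hsymT, expair huv hsymBe, expair huv hsymC]
      tauto
    have hLc : Lcount Lx Ly (Hx, Hy) (m : ℤ)
        = ((((sites Lx Ly).erase (Hx, Hy)).powersetCard 2).filter
            (fun s => ∃ p ∈ s, ∃ q ∈ s, p ≠ q ∧ Between p (Hx, Hy) q ∧ taxi p q = (m : ℤ))).card := by
      unfold Lcount
      exact congrArg Finset.card (Finset.filter_congr_decidable _ _ _)
    rw [hA, hB] at hsplit
    rw [hLc]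
    omega
  -- e4 : pairs over all sites vs pairs avoiding h
  have e4 : pairCount Lx Ly (m : ℤ)
      = ((((sites Lx Ly).erase (Hx, Hy)).powersetCard 2).filter
          (fun s => ∃ p ∈ s, ∃ q ∈ s, p ≠ q ∧ taxi p q = (m : ℤ))).card
        + Acount Lx Ly (Hx, Hy) (m : ℤ) := by
    have hsplit := Finset.card_filter_add_card_filter_not
      (s := ((sites Lx Ly).powersetCard 2).filter
        (fun s => ∃ p ∈ s, ∃ q ∈ s, p ≠ q ∧ taxi p q = (m : ℤ)))
      (p := fun s => (Hx, Hy) ∈ s)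
    rw [Finset.filter_filter, Finset.filter_filter] at hsplit
    have hneg : ((sites Lx Ly).powersetCard 2).filter
          (fun s => (∃ p ∈ s, ∃ q ∈ s, p ≠ q ∧ taxi p q = (m : ℤ)) ∧ (Hx, Hy) ∉ s)
        = (((sites Lx Ly).erase (Hx, Hy)).powersetCard 2).filter
          (fun s => ∃ p ∈ s, ∃ q ∈ s, p ≠ q ∧ taxi p q = (m : ℤ)) := by
      ext s
      simp only [Finset.mem_filter, Finset.mem_powersetCard, Finset.subset_erase]
      tauto
    have hpos : ((sites Lx Ly).powersetCard 2).filter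
          (fun s => (∃ p ∈ s, ∃ q ∈ s, p ≠ q ∧ taxi p q = (m : ℤ)) ∧ (Hx, Hy) ∈ s)
        = ((sites Lx Ly).filter (fun p => taxi p (Hx, Hy) = (m : ℤ))).image
            (fun p => ({(Hx, Hy), p} : Finset (ℤ × ℤ))) := by
      ext s
      simp only [Finset.mem_filter, Finset.mem_image, Finset.mem_powersetCard]
      constructor
      · rintro ⟨⟨hsub, hcard⟩, hT, hhs⟩
        obtain ⟨u, v, huv, rfl⟩ := Finset.card_eq_two.mp hcard
        obtain ⟨p, hp, q, hq, hpq, ht⟩ := hT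
        simp only [Finset.mem_insert, Finset.mem_singleton] at hhs hp hq
        rcases hhs with rfl | rfl
        · refine ⟨v, ⟨hsub (by simp), ?_⟩, rfl⟩
          rcases hp with rfl | rfl <;> rcases hq with rfl | rfl
          · exact absurd rfl hpq
          · rw [taxi_comm]; exact ht
          · exact ht
          · exact absurd rfl hpq
        · refine ⟨u, ⟨hsub (by simp), ?_⟩, ?_⟩
          · rcases hp with rfl | rfl <;> rcases hq with rfl | rfl
            · exact absurd rfl hpq
            · exact ht
            · rw [taxi_comm]; exact ht
            · exact absurd rfl hpq
          · exact Finset.pair_comm (Hx, Hy) u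
      · rintro ⟨p, ⟨hpsites, ht⟩, rfl⟩
        have hph : p ≠ (Hx, Hy) := by
          intro heq
          rw [heq, taxi_natAbs] at ht
          simp only [sub_self, Int.natAbs_zero] at ht
          omega
        refine ⟨⟨?_, Finset.card_pair (Ne.symm hph)⟩,
          ⟨p, by simp, (Hx, Hy), by simp, hph, ht⟩, by simp⟩
        intro x hx
        simp only [Finset.mem_insert, Finset.mem_singleton] at hx
        rcases hx with rfl | rfl
        · simp only [sites, Finset.mem_Icc, Prod.le_def]
          constructor
          · exact ⟨by omega, by omega⟩
          · exact ⟨by omega, by omega⟩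
        · exact hpsites
    have hinj : Set.InjOn (fun p => ({(Hx, Hy), p} : Finset (ℤ × ℤ)))
        ((sites Lx Ly).filter (fun p => taxi p (Hx, Hy) = (m : ℤ))) := by
      intro p hp q hq he
      simp only [Finset.mem_coe, Finset.mem_filter] at hp hq
      have hph : p ≠ (Hx, Hy) := by
        intro heq
        rw [heq, taxi_natAbs] at hp
        simp only [sub_self, Int.natAbs_zero] at hp
        omega
      have he' : ({(Hx, Hy), p} : Finset (ℤ × ℤ)) = {(Hx, Hy), q} := he
      have : p ∈ ({(Hx, Hy), q} : Finset (ℤ × ℤ)) := by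
        rw [← he']; simp
      simp only [Finset.mem_insert, Finset.mem_singleton] at this
      rcases this with h | h
      · exact absurd h hph
      · exact h
    have hAc : Acount Lx Ly (Hx, Hy) (m : ℤ)
        = (((sites Lx Ly).filter (fun p => taxi p (Hx, Hy) = (m : ℤ)))).card := by
      unfold Acount
      exact congrArg Finset.card (Finset.filter_congr_decidable _ _ _)
    have hPc : pairCount Lx Ly (m : ℤ)
        = (((sites Lx Ly).powersetCard 2).filter
            (fun s => ∃ p ∈ s, ∃ q ∈ s, p ≠ q ∧ taxi p q = (m : ℤ))).card := by
      unfold pairCount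
      exact congrArg Finset.card (Finset.filter_congr_decidable _ _ _)
    rw [hneg, hpos, Finset.card_image_of_injOn hinj] at hsplit
    rw [hAc, hPc]
    omega
  rw [e1, e2]
  push_cast
  omega
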